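/- Let n ∈ ℕ and let B, C, X, Z be n×n complex matrices such that X² + B·X + C = 0 and Z² + B·Z + C = 0. Then for every λ ∈ ℂ such that λ²·1 + λ·B + C, λ·1 − X, and λ·1 − Z are all invertible, one has (λ²·1 + λ·B + C)⁻¹·(X − Z) = (λ·1 − X)⁻¹ − (λ·1 − Z)⁻¹. -/
import Mathlib


/-- For right solvents `X`, `Z` and `λ` with `λ²·1 + λ·B + C`, `λ·1 − X`,
`λ·1 − Z` all invertible:
`(λ²·1 + λ·B + C)⁻¹·(X − Z) = (λ·1 − X)⁻¹ − (λ·1 − Z)⁻¹`. -/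
theorem resolvent_mul_diff_eq_sub_resolvents (n : ℕ) (B C X Z : Matrix (Fin n) (Fin n) ℂ)
    (hX : X ^ 2 + B * X + C = 0) (hZ : Z ^ 2 + B * Z + C = 0) :
    ∀ lam : ℂ,
      IsUnit ((lam ^ 2) • (1 : Matrix (Fin n) (Fin n) ℂ) + lam • B + C) →
      IsUnit (lam • (1 : Matrix (Fin n) (Fin n) ℂ) - X) →
      IsUnit (lam • (1 : Matrix (Fin n) (Fin n) ℂ) - Z) →
      ((lam ^ 2) • (1 : Matrix (Fin n) (Fin n) ℂ) + lam • B + C)⁻¹ * (X - Z) =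
        (lam • (1 : Matrix (Fin n) (Fin n) ℂ) - X)⁻¹ -
          (lam • (1 : Matrix (Fin n) (Fin n) ℂ) - Z)⁻¹ := by
  intro lam hL hMX hMZ
  set L : Matrix (Fin n) (Fin n) ℂ := (lam ^ 2) • 1 + lam • B + C with hLdef
  set MX : Matrix (Fin n) (Fin n) ℂ := lam • 1 - X with hMXdef
  set MZ : Matrix (Fin n) (Fin n) ℂ := lam • 1 - Z with hMZdef
  have hCX : C = -(X ^ 2) - B * X := by
    have := hX; linear_combination (norm := noncomm_ring) hX
  have hfX : L = (lam • 1 + X + B) * MX := by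
    rw [hLdef, hMXdef, hCX]
    simp only [Matrix.mul_sub, Matrix.add_mul, Matrix.smul_mul, Matrix.mul_smul,
      Matrix.one_mul, Matrix.mul_one, smul_add, smul_sub, smul_smul, pow_two]
    noncomm_ring
  have hCZ : C = -(Z ^ 2) - B * Z := by
    linear_combination (norm := noncomm_ring) hZ
  have hfZ : L = (lam • 1 + Z + B) * MZ := by
    rw [hLdef, hMZdef, hCZ]
    simp only [Matrix.mul_sub, Matrix.add_mul, Matrix.smul_mul, Matrix.mul_smul,
      Matrix.one_mul, Matrix.mul_one, smul_add, smul_sub, smul_smul, pow_two]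
    noncomm_ring
  have key : L * (MX⁻¹ - MZ⁻¹) = X - Z := by
    rw [Matrix.mul_sub]
    nth_rewrite 1 [hfX]
    rw [hfZ]
    rw [mul_assoc, mul_assoc, Matrix.mul_nonsing_inv _ ((Matrix.isUnit_iff_isUnit_det _).mp hMX),
      Matrix.mul_nonsing_inv _ ((Matrix.isUnit_iff_isUnit_det _).mp hMZ)]
    noncomm_ring
  calc L⁻¹ * (X - Z) = L⁻¹ * (L * (MX⁻¹ - MZ⁻¹)) := by rw [key]
    _ = MX⁻¹ - MZ⁻¹ := by
        rw [← mul_assoc, Matrix.nonsing_inv_mul _ ((Matrix.isUnit_iff_isUnit_det _).mp hL),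
          one_mul]
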